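/- Let T = {t_{ij} : 1 ≤ j ≤ i ≤ n} be a scalar lower-triangular partial matrix over a field. The minimal rank of T (minimum of rank B over all n×n matrices B with b_{ij} = t_{ij} for j ≤ i) equals n if and only if t_{ii} ≠ 0 for all i and t_{ij} = 0 for all i > j. -/

import Mathlib

open Matrix

lemma rank_lt_of_mulVec_eq_zero {F : Type*} [Field F] {n : ℕ}
    (B : Matrix (Fin n) (Fin n) F) {x : Fin n → F} (hx : x ≠ 0)
    (h : B.mulVec x = 0) : B.rank < n := by
  have hker : x ∈ LinearMap.ker B.mulVecLin := by simpa [Matrix.mulVecLin] using h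
  have h1 : 0 < Module.finrank F (LinearMap.ker B.mulVecLin) := by
    rw [Module.finrank_pos_iff]
    exact ⟨⟨⟨x, hker⟩, 0, by simpa using hx⟩⟩
  have h2 := LinearMap.finrank_range_add_finrank_ker B.mulVecLin
  have : B.rank = Module.finrank F (LinearMap.range B.mulVecLin) := rfl
  simp [Module.finrank_fintype_fun_eq_card] at h2
  omega

lemma exists_singular_completion {F : Type*} [Field F] {n : ℕ}
    (t : Matrix (Fin n) (Fin n) F)
    (hbad : ∃ i : Fin n, t i i = 0 ∨ ∃ j, j < i ∧ t i j ≠ 0) :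
    ∃ B : Matrix (Fin n) (Fin n) F,
      (∀ i j : Fin n, j ≤ i → B i j = t i j) ∧ B.rank < n := by
  classical
  obtain ⟨i, hPi, hmax⟩ : ∃ i : Fin n, (t i i = 0 ∨ ∃ j, j < i ∧ t i j ≠ 0) ∧
      ∀ p : Fin n, (t p p = 0 ∨ ∃ j, j < p ∧ t p j ≠ 0) → p ≤ i := by
    obtain ⟨i, hi⟩ := hbad
    obtain ⟨b, hb, hball⟩ := Finset.exists_max_image
      (Finset.univ.filter fun p : Fin n => t p p = 0 ∨ ∃ j, j < p ∧ t p j ≠ 0) id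
      ⟨i, by simpa using hi⟩
    exact ⟨b, by simpa using hb, fun p hp => hball p (by simpa using hp)⟩
  have hgood : ∀ p : Fin n, i < p → t p p ≠ 0 ∧ ∀ q, q < p → t p q = 0 := by
    intro p hp
    constructor
    · intro h
      exact absurd (hmax p (Or.inl h)) (not_le.mpr hp)
    · intro q hq
      by_contra h
      exact absurd (hmax p (Or.inr ⟨q, hq, h⟩)) (not_le.mpr hp)
  by_cases hii : t i i = 0
  · refine ⟨fun p q => if q ≤ p then t p q else 0, fun p q h => by simp [h], ?_⟩
    apply rank_lt_of_mulVec_eq_zero _ (x := Pi.single i 1)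
    · intro h
      have := congrFun h i
      simp at this
    · funext p
      simp only [Matrix.mulVec, dotProduct, Pi.zero_apply]
      rw [Finset.sum_eq_single i]
      · rcases lt_trichotomy p i with h | h | h
        · simp [not_le.mpr h]
        · simp [h, hii]
        · simp [h.le, (hgood p h).2 i h]
      · intro q _ hq; simp [Pi.single_eq_of_ne hq]
      · simp
  · obtain ⟨j, hji, htij⟩ : ∃ j, j < i ∧ t i j ≠ 0 := by
      rcases hPi with h | h
      · exact absurd h hii
      · exact h
    set c : F := -t i j / t i i with hc
    have hcne : c ≠ 0 := by
      simp [hc, div_eq_zero_iff, htij, hii]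
    set B : Matrix (Fin n) (Fin n) F := fun p q =>
      if q ≤ p then t p q
      else if q = i then -(if j ≤ p then t p j else 0) / c else 0 with hB
    refine ⟨B, fun p q h => by simp [hB, h], ?_⟩
    apply rank_lt_of_mulVec_eq_zero _ (x := Pi.single j 1 + Pi.single i c)
    · intro h
      have := congrFun h j
      simp [Pi.single_eq_of_ne hji.ne] at this
    · rw [Matrix.mulVec_add]
      funext p
      rw [Matrix.mulVec_single, Matrix.mulVec_single]
      simp only [Pi.add_apply, Pi.zero_apply]
      simp only [Pi.smul_apply, Matrix.col_apply, op_smul_eq_mul]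
      rcases lt_trichotomy p i with h | h | h
      · have hBpi : B p i = -(if j ≤ p then t p j else 0) / c := by
          simp [hB, not_le.mpr h]
        have hBpj : B p j = if j ≤ p then t p j else 0 := by
          by_cases hjp : j ≤ p
          · simp [hB, hjp]
          · simp [hB, hjp, hji.ne]
        rw [hBpi, hBpj]
        field_simp
        ring
      · have hBpj : B p j = t p j := by simp [hB, h ▸ hji.le]
        have hBpi : B p i = t p i := by simp [hB, h.ge]
        rw [hBpj, hBpi, h, hc]
        field_simp
        ring
      · have h2 := (hgood p h).2
        have hBpj : B p j = 0 := by simp [hB, (hji.trans h).le, h2 j (hji.trans h)]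
        have hBpi : B p i = 0 := by simp [hB, h.le, h2 i h]
        simp [hBpj, hBpi]

/-- The minimal rank of a scalar lower-triangular partial matrix
`{t_{ij} : j ≤ i}` equals `n` iff the diagonal entries are nonzero and the
strictly lower triangular entries are zero. -/
theorem minRank_eq_n_iff {F : Type*} [Field F] {n : ℕ}
    (t : Matrix (Fin n) (Fin n) F) :
    sInf {r : ℕ | ∃ B : Matrix (Fin n) (Fin n) F,
        (∀ i j : Fin n, j ≤ i → B i j = t i j) ∧ B.rank = r} = n ↔
      (∀ i : Fin n, t i i ≠ 0) ∧ (∀ i j : Fin n, j < i → t i j = 0) := by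
  classical
  constructor
  · intro h
    by_contra hcon
    have hbad : ∃ i : Fin n, t i i = 0 ∨ ∃ j, j < i ∧ t i j ≠ 0 := by
      rcases not_and_or.mp hcon with h1 | h2
      · push_neg at h1
        obtain ⟨i, hi⟩ := h1
        exact ⟨i, Or.inl hi⟩
      · push_neg at h2
        obtain ⟨i, j, hji, hij⟩ := h2
        exact ⟨i, Or.inr ⟨j, hji, hij⟩⟩
    obtain ⟨B, hB, hrank⟩ := exists_singular_completion t hbad
    have hle : sInf {r : ℕ | ∃ B : Matrix (Fin n) (Fin n) F,
        (∀ i j : Fin n, j ≤ i → B i j = t i j) ∧ B.rank = r} ≤ B.rank :=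
      Nat.sInf_le ⟨B, hB, rfl⟩
    rw [h] at hle
    exact absurd hle (not_le.mpr hrank)
  · rintro ⟨hd, hl⟩
    have key : ∀ B : Matrix (Fin n) (Fin n) F,
        (∀ i j : Fin n, j ≤ i → B i j = t i j) → B.rank = n := by
      intro B hB
      have hut : B.BlockTriangular id := by
        intro p q hpq
        rw [hB p q (le_of_lt hpq)]
        exact hl p q hpq
      have hdet : B.det ≠ 0 := by
        rw [Matrix.det_of_upperTriangular hut]
        exact Finset.prod_ne_zero_iff.mpr fun p _ => by
          rw [hB p p le_rfl]; exact hd p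
      have := Matrix.rank_of_isUnit B ((Matrix.isUnit_iff_isUnit_det B).mpr hdet.isUnit)
      simpa using this
    have hmem : n ∈ {r : ℕ | ∃ B : Matrix (Fin n) (Fin n) F,
        (∀ i j : Fin n, j ≤ i → B i j = t i j) ∧ B.rank = r} := by
      refine ⟨fun p q => if q ≤ p then t p q else 0, fun p q h => by simp [h], ?_⟩
      exact key _ fun p q h => by simp [h]
    refine le_antisymm (Nat.sInf_le hmem) (le_csInf ⟨n, hmem⟩ ?_)
    rintro r ⟨B, hB, rfl⟩
    exact (key B hB).ge
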